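/- Let π_a : (0,1) → [0,∞) and π_v : (0,∞) → [0,∞) be measurable prior densities. Define C(v) = Σₖ cₖ(v)n₀ₖ/σ₀ₖ², Q(v) = exp{−(f(v)/(2C(v)))(Σₖ cₖ(v)Yₖ)²} · (f(v)C(v))^{1/2}, and R(v) = v^{−(K+1)/2} · Πₖ Nₖ(v)^{1/2} · A(v)^{−1/2} · exp{(Σₖ YₖNₖ(v))²/(2v²A(v))} · exp{(1/2)Σₖ Yₖ²Nₖ(v)}. Assume f is differentiable on (0,∞) with derivative f′ and that Q(v) · |f′(v)| · π_a(f(v)) = R(v) · π_v(v) for all v > 0. Define the BNPP normalizing constant c(v) = ∫_ℝ Πₖ exp{−(cₖ(v)f(v)/(2σ₀ₖ²))(S₀ₖ + n₀ₖ(ȳ₀ₖ − t)²)} dt, the BNPP marginal (expressed after the change of variables a₀ = f(v), with dataset-specific exponents hₖ(a₀) = cₖ(v)f(v)) g_BNPP(θ) = ∫_{(0,∞)} exp{−(n/(2σ²))(ȳ − θ)²} · Πₖ exp{−(cₖ(v)f(v)/(2σ₀ₖ²))(S₀ₖ + n₀ₖ(ȳ₀ₖ − θ)²)} · c(v)⁻¹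 · π_a(f(v)) · |f′(v)| dv, and the hierarchical-model marginal (improper uniform prior on μ) g_BHM(θ) = ∫_{(0,∞)} ∫_ℝ ∫_{ℝᴷ} v^{−(K+1)/2} exp{−(n/(2σ²))(ȳ − θ)² − (1/2)Σₖ (n₀ₖ/σ₀ₖ²)(ȳ₀ₖ − θ₀ₖ)² − (θ − μ)²/(2v) − (1/(2v))Σₖ(θ₀ₖ − μ)²} π_v(v) dθ₀ dμ dv. Assume g_BNPP(θ) and g_BHM(θ) are finite for every θ. Then there exists a constant C > 0, not depending on θ, such that g_BNPP(θ) = C · g_BHM(θ) for all θ ∈ ℝ. -/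

import Mathlib

open MeasureTheory Real Set

lemma gauss_key (p b c : ℝ) (hp : 0 < p) :
    ∫ t : ℝ, Real.exp (-(p/2) * t^2 + b*t + c)
      = Real.sqrt (2*π/p) * Real.exp (b^2/(2*p) + c) := by
  have h : ∀ t : ℝ, -(p/2) * t^2 + b*t + c
      = -(p/2) * (t - b/p)^2 + (b^2/(2*p) + c) := by
    intro t; field_simp; ring
  calc ∫ t : ℝ, Real.exp (-(p/2) * t^2 + b*t + c)
      = ∫ t : ℝ, Real.exp (-(p/2) * (t - b/p)^2) * Real.exp (b^2/(2*p)+c) := by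
        congr 1; funext t; rw [← Real.exp_add, ← h t]
    _ = (∫ t : ℝ, Real.exp (-(p/2) * (t - b/p)^2)) * Real.exp (b^2/(2*p)+c) :=
        integral_mul_const _ _
    _ = (∫ t : ℝ, Real.exp (-(p/2) * t^2)) * Real.exp (b^2/(2*p)+c) := by
        rw [integral_sub_right_eq_self (fun t => Real.exp (-(p/2)*t^2)) (b/p)]
    _ = Real.sqrt (π/(p/2)) * Real.exp (b^2/(2*p)+c) := by rw [integral_gaussian]
    _ = _ := by rw [show π/(p/2) = 2*π/p by ring]

lemma gauss_two (α β m1 m2 : ℝ) (hα : 0 < α) (hβ : 0 < β) :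
    ∫ t : ℝ, Real.exp (-(α/2)*(m1-t)^2 - (β/2)*(m2-t)^2)
      = Real.sqrt (2*π/(α+β)) * Real.exp (-(α*β/(α+β))/2 * (m1-m2)^2) := by
  have hp : 0 < α + β := by linarith
  have h := gauss_key (α+β) (α*m1+β*m2) (-(α*m1^2+β*m2^2)/2) hp
  calc ∫ t : ℝ, Real.exp (-(α/2)*(m1-t)^2 - (β/2)*(m2-t)^2)
      = ∫ t : ℝ, Real.exp (-((α+β)/2) * t^2 + (α*m1+β*m2)*t + (-(α*m1^2+β*m2^2)/2)) := by
        congr 1; funext t; congr 1; ring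
    _ = Real.sqrt (2*π/(α+β)) * Real.exp ((α*m1+β*m2)^2/(2*(α+β)) + (-(α*m1^2+β*m2^2)/2)) := h
    _ = _ := by
        congr 2
        field_simp
        ring

lemma sum_quad {K : ℕ} (h y : Fin K → ℝ) (t : ℝ) :
    ∑ k, h k * (y k - t)^2
      = (∑ k, h k * (y k)^2) - 2*t*(∑ k, h k * y k) + (∑ k, h k)*t^2 := by
  have e : ∀ k : Fin K, h k * (y k - t)^2
      = (h k * y k^2 - h k * y k * (2*t)) + h k * t^2 := fun k => by ring
  simp only [e]
  rw [Finset.sum_add_distrib, Finset.sum_sub_distrib, ← Finset.sum_mul, ← Finset.sum_mul]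
  ring

lemma final_combine (K : ℕ) (aa X1 E1 q3 x4 x5 w2 BC : ℝ)
    (sq2π sqp rv pN sqvf pv : ℝ) (h2 : sq2π ≠ 0) (hsp : sqp ≠ 0)
    (hargs : aa + X1 + -E1 + -q3 + x4 + x5 = (1/2)*w2 + BC) :
    Real.exp aa * Real.exp X1 * (sq2π/sqp * Real.exp E1)⁻¹ *
      ((Real.exp q3 * sqp)⁻¹ * ((rv * pN * sqvf * Real.exp x4 * Real.exp x5) * pv))
    = (sq2π⁻¹^(K+2) * Real.exp ((1/2)*w2)) *
      ((rv * pv * (sq2π^K * pN)) * (sq2π * sqvf * Real.exp BC)) := by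
  have hcomb : Real.exp aa * Real.exp X1 * (Real.exp E1)⁻¹ * (Real.exp q3)⁻¹ *
      Real.exp x4 * Real.exp x5 = Real.exp ((1/2)*w2) * Real.exp BC := by
    rw [← Real.exp_neg, ← Real.exp_neg, ← Real.exp_add, ← Real.exp_add, ← Real.exp_add,
      ← Real.exp_add, ← Real.exp_add, ← Real.exp_add, hargs]
  have hBC : Real.exp BC = (Real.exp ((1/2)*w2))⁻¹ *
      (Real.exp aa * Real.exp X1 * (Real.exp E1)⁻¹ * (Real.exp q3)⁻¹ *
        Real.exp x4 * Real.exp x5) := by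
    rw [hcomb]
    field_simp
  rw [hBC]
  field_simp [Real.exp_ne_zero]
  have ht : sq2π ^ 2 * (1/sq2π)^(K+2) * sq2π^K = 1 := by
    rw [one_div, inv_pow, pow_add]; field_simp
  linear_combination (-(rv*pN*sqvf*pv)) * ht

set_option maxHeartbeats 1000000

/-- if the priors `π_a` (on the global discounting parameter, via the change
of variables `a₀ = f(v)`) and `π_v` (on the BHM variance) satisfy the matching condition
`Q(v)·|f′(v)|·π_a(f(v)) = R(v)·π_v(v)`, then the marginal posterior of `θ` under the
BHM-matching normalized power prior (BNPP) is proportional to the marginal posterior of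
`θ` under the `K`-dataset Bayesian hierarchical model. -/
theorem stmt_2 (K : ℕ) (hK : 1 ≤ K)
    (σ2 n : ℝ) (hσ2 : 0 < σ2) (hn : 0 < n) (ybar : ℝ)
    (σ02 n0 ybar0 S0 : Fin K → ℝ)
    (hσ02 : ∀ k, 0 < σ02 k) (hn0 : ∀ k, 0 < n0 k) (hS0 : ∀ k, 0 ≤ S0 k)
    (N : ℝ → Fin K → ℝ)
    (hN : ∀ v > (0 : ℝ), ∀ k, N v k = (n0 k / σ02 k + 1 / v)⁻¹)
    (ck : ℝ → Fin K → ℝ)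
    (hck : ∀ v > (0 : ℝ), ∀ k, ck v k = (1 + n0 k * v / σ02 k)⁻¹)
    (f : ℝ → ℝ)
    (hfdef : ∀ v > (0 : ℝ), f v = (1 + ∑ k, (n0 k / σ02 k) * N v k)⁻¹)
    (Y : Fin K → ℝ) (hY : ∀ k, Y k = n0 k * ybar0 k / σ02 k)
    (A : ℝ → ℝ)
    (hA : ∀ v > (0 : ℝ), A v = (1 + K) / v - (∑ k, N v k) / v ^ 2)
    (πa πv : ℝ → ℝ) (hπa_meas : Measurable πa) (hπv_meas : Measurable πv)
    (hπa_nonneg : ∀ a ∈ Ioo (0 : ℝ) 1, 0 ≤ πa a)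
    (hπv_nonneg : ∀ v ∈ Ioi (0 : ℝ), 0 ≤ πv v)
    (Cf Q R : ℝ → ℝ)
    (hCf : ∀ v > (0 : ℝ), Cf v = ∑ k, ck v k * n0 k / σ02 k)
    (hQ : ∀ v > (0 : ℝ), Q v =
      Real.exp (-(f v / (2 * Cf v)) * (∑ k, ck v k * Y k) ^ 2) * Real.sqrt (f v * Cf v))
    (hR : ∀ v > (0 : ℝ), R v =
      v ^ (-(((K : ℝ) + 1) / 2)) * (∏ k, Real.sqrt (N v k)) * (Real.sqrt (A v))⁻¹ *
        Real.exp ((∑ k, Y k * N v k) ^ 2 / (2 * v ^ 2 * A v)) *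
        Real.exp ((1 / 2) * ∑ k, Y k ^ 2 * N v k))
    (f' : ℝ → ℝ) (hf' : ∀ v > (0 : ℝ), HasDerivAt f (f' v) v)
    (hmatch : ∀ v > (0 : ℝ), Q v * |f' v| * πa (f v) = R v * πv v)
    (cnorm : ℝ → ℝ)
    (hcnorm : ∀ v > (0 : ℝ), cnorm v = ∫ t : ℝ,
      ∏ k, Real.exp (-(ck v k * f v / (2 * σ02 k)) * (S0 k + n0 k * (ybar0 k - t) ^ 2)))
    (gBNPP gBHM : ℝ → ℝ)
    (hgBNPP : ∀ θ, gBNPP θ = ∫ v in Ioi (0 : ℝ),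
        Real.exp (-(n / (2 * σ2)) * (ybar - θ) ^ 2) *
          (∏ k, Real.exp (-(ck v k * f v / (2 * σ02 k)) *
            (S0 k + n0 k * (ybar0 k - θ) ^ 2))) *
          (cnorm v)⁻¹ * πa (f v) * |f' v|)
    (hgBHM : ∀ θ, gBHM θ = ∫ v in Ioi (0 : ℝ), ∫ μ : ℝ, ∫ θ0 : Fin K → ℝ,
        v ^ (-(((K : ℝ) + 1) / 2)) *
          Real.exp (-(n / (2 * σ2)) * (ybar - θ) ^ 2 -
            (1 / 2) * ∑ k, (n0 k / σ02 k) * (ybar0 k - θ0 k) ^ 2 -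
            (θ - μ) ^ 2 / (2 * v) - (1 / (2 * v)) * ∑ k, (θ0 k - μ) ^ 2) * πv v)
    (hBNPP_fin : ∀ θ : ℝ, IntegrableOn (fun v =>
        Real.exp (-(n / (2 * σ2)) * (ybar - θ) ^ 2) *
          (∏ k, Real.exp (-(ck v k * f v / (2 * σ02 k)) *
            (S0 k + n0 k * (ybar0 k - θ) ^ 2))) *
          (cnorm v)⁻¹ * πa (f v) * |f' v|) (Ioi (0 : ℝ)))
    (hBHM_fin : ∀ θ : ℝ, IntegrableOn (fun v => ∫ μ : ℝ, ∫ θ0 : Fin K → ℝ,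
        v ^ (-(((K : ℝ) + 1) / 2)) *
          Real.exp (-(n / (2 * σ2)) * (ybar - θ) ^ 2 -
            (1 / 2) * ∑ k, (n0 k / σ02 k) * (ybar0 k - θ0 k) ^ 2 -
            (θ - μ) ^ 2 / (2 * v) - (1 / (2 * v)) * ∑ k, (θ0 k - μ) ^ 2) * πv v)
        (Ioi (0 : ℝ))) :
    ∃ C : ℝ, 0 < C ∧ ∀ θ : ℝ, gBNPP θ = C * gBHM θ := by
  have h2π : (0:ℝ) < 2 * π := by positivity
  have hs2pi : (0:ℝ) < Real.sqrt (2*π) := Real.sqrt_pos.mpr h2π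
  refine ⟨(Real.sqrt (2*π))⁻¹ ^ (K+2) *
      Real.exp ((1/2) * ∑ k, (n0 k / σ02 k) * ybar0 k ^ 2),
    mul_pos (pow_pos (inv_pos.mpr hs2pi) _) (Real.exp_pos _), fun θ => ?_⟩
  rw [hgBNPP θ, hgBHM θ, ← integral_const_mul]
  refine setIntegral_congr_fun measurableSet_Ioi fun v hv => ?_
  have hv0 : (0:ℝ) < v := hv
  -- basic positivity
  have hd : ∀ k, (0:ℝ) < σ02 k + n0 k * v :=
    fun k => add_pos (hσ02 k) (mul_pos (hn0 k) hv0)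
  have hckval : ∀ k, ck v k = σ02 k / (σ02 k + n0 k * v) := by
    intro k
    rw [hck v hv0 k, show (1 + n0 k * v / σ02 k) = (σ02 k + n0 k * v) / σ02 k by
      field_simp [(hσ02 k).ne'], inv_div]
  have hNval : ∀ k, N v k = σ02 k * v / (σ02 k + n0 k * v) := by
    intro k
    rw [hN v hv0 k, show (n0 k / σ02 k + 1 / v) = (σ02 k + n0 k * v) / (σ02 k * v) by
      rw [eq_div_iff (mul_pos (hσ02 k) hv0).ne']; field_simp [(hσ02 k).ne', hv0.ne']; ring,
      inv_div]
  have hNpos : ∀ k, 0 < N v k := fun k => by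
    rw [hNval k]; exact div_pos (mul_pos (hσ02 k) hv0) (hd k)
  -- the per-dataset coefficient
  set H : Fin K → ℝ := fun k => ck v k * n0 k / σ02 k with hH
  have hHval : ∀ k, H k = n0 k / (σ02 k + n0 k * v) := by
    intro k; rw [hH]; simp only; rw [hckval k]
    field_simp [(hσ02 k).ne', (hd k).ne']
  have hHpos : ∀ k, 0 < H k := fun k => by
    rw [hHval k]; exact div_pos (hn0 k) (hd k)
  have hCfeq : Cf v = ∑ k, H k := hCf v hv0
  have hCfpos : 0 < Cf v := by
    rw [hCfeq]
    have : Nonempty (Fin K) := ⟨⟨0, hK⟩⟩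
    exact Finset.sum_pos (fun k _ => hHpos k) Finset.univ_nonempty
  have hfval : f v = (1 + v * Cf v)⁻¹ := by
    rw [hfdef v hv0, hCfeq, Finset.mul_sum]
    congr 2
    refine Finset.sum_congr rfl fun k _ => ?_
    rw [hNval k, hHval k]
    field_simp [(hσ02 k).ne', (hd k).ne']
  have h1vCf : 0 < 1 + v * Cf v := by nlinarith
  have hfpos : 0 < f v := by
    rw [hfval]; exact inv_pos.mpr h1vCf
  have hp : 0 < f v * Cf v := mul_pos hfpos hCfpos
  have hAval : A v = (v * f v)⁻¹ := by
    have hNsum : ∑ k, N v k = ∑ k, (v - v^2 * H k) := by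
      refine Finset.sum_congr rfl fun k _ => ?_
      rw [hNval k, hHval k]
      field_simp [(hσ02 k).ne', (hd k).ne']
      rw [eq_sub_iff_add_eq, ← add_div]
      exact div_self (ne_of_gt (by linarith [hd k, mul_comm (n0 k) v]))
    rw [hA v hv0, hfval, hNsum, Finset.sum_sub_distrib, Finset.sum_const,
      ← Finset.mul_sum, ← hCfeq, Finset.card_univ, Fintype.card_fin]
    field_simp
    ring
  -- abbreviations for sums
  set S : ℝ := ∑ k, H k * ybar0 k with hS
  set SY2 : ℝ := ∑ k, H k * ybar0 k ^ 2 with hSY2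
  set SS0 : ℝ := ∑ k, ck v k * S0 k / σ02 k with hSS0
  set W2 : ℝ := ∑ k, (n0 k / σ02 k) * ybar0 k ^ 2 with hW2
  set a : ℝ := -(n / (2 * σ2)) * (ybar - θ) ^ 2 with ha
  set cc : ℝ := -(f v / 2) * (SS0 + SY2) with hcc
  -- the BNPP per-k product as a single exponential
  have hcnProd : ∀ t : ℝ,
      (∏ k, Real.exp (-(ck v k * f v / (2 * σ02 k)) * (S0 k + n0 k * (ybar0 k - t) ^ 2)))
        = Real.exp (-(f v * Cf v / 2) * t ^ 2 + (f v * S) * t + cc) := by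
    intro t
    rw [← Real.exp_sum]
    congr 1
    have e : ∀ k : Fin K, -(ck v k * f v / (2 * σ02 k)) * (S0 k + n0 k * (ybar0 k - t) ^ 2)
        = (-(f v / 2)) * (ck v k * S0 k / σ02 k) + (-(f v / 2)) * (H k * (ybar0 k - t) ^ 2) := by
      intro k; rw [hH]; simp only; ring
    simp only [e]
    rw [Finset.sum_add_distrib, ← Finset.mul_sum, ← Finset.mul_sum, sum_quad H ybar0 t,
      hcc, hSS0, hSY2, hS, hCfeq]
    ring
  -- further sum identities
  have hS'eq : (∑ k, ck v k * Y k) = S := by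
    rw [hS]
    refine Finset.sum_congr rfl fun k _ => ?_
    rw [hY k, hH]; simp only; ring
  have hYN : (∑ k, Y k * N v k) = v * S := by
    rw [hS, Finset.mul_sum]
    refine Finset.sum_congr rfl fun k _ => ?_
    rw [hY k, hNval k, hHval k]
    field_simp [(hσ02 k).ne', (hd k).ne']
  have hY2N : (∑ k, Y k ^ 2 * N v k) = W2 - SY2 := by
    rw [hW2, hSY2, ← Finset.sum_sub_distrib]
    refine Finset.sum_congr rfl fun k _ => ?_
    rw [hY k, hNval k, hHval k]
    field_simp [(hσ02 k).ne', (hd k).ne']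
    ring
  -- closed forms for cnorm, Q, R
  have hcnval : cnorm v = Real.sqrt (2*π) / Real.sqrt (f v * Cf v) *
      Real.exp ((f v * S)^2 / (2*(f v * Cf v)) + cc) := by
    rw [hcnorm v hv0]
    simp only [hcnProd]
    rw [gauss_key (f v * Cf v) (f v * S) cc hp, Real.sqrt_div h2π.le]
  have hQval : Q v = Real.exp (-(f v / (2 * Cf v)) * S ^ 2) * Real.sqrt (f v * Cf v) := by
    rw [hQ v hv0, hS'eq]
  have hsqA : (Real.sqrt (A v))⁻¹ = Real.sqrt (v * f v) := by
    rw [hAval, Real.sqrt_inv, inv_inv]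
  have hRval : R v = v ^ (-(((K : ℝ) + 1) / 2)) * (∏ k, Real.sqrt (N v k)) *
      Real.sqrt (v * f v) * Real.exp ((v*S)^2 / (2 * v^2 * (v * f v)⁻¹)) *
      Real.exp ((1/2) * (W2 - SY2)) := by
    rw [hR v hv0, hYN, hY2N, hsqA, hAval]
  have hQpos : 0 < Q v := by
    rw [hQval]; exact mul_pos (Real.exp_pos _) (Real.sqrt_pos.mpr hp)
  have hmatch' : πa (f v) * |f' v| = (Q v)⁻¹ * (R v * πv v) := by
    rw [← hmatch v hv0]
    field_simp
  -- abbreviation for the rpow factor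
  set rv : ℝ := v ^ (-(((K : ℝ) + 1) / 2)) with hrv
  -- the inner θ0 integral
  have hinner : ∀ μ : ℝ, (∫ θ0 : Fin K → ℝ,
      rv * Real.exp (a - (1/2) * ∑ k, (n0 k / σ02 k) * (ybar0 k - θ0 k) ^ 2
        - (θ - μ) ^ 2 / (2 * v) - (1/(2*v)) * ∑ k, (θ0 k - μ) ^ 2) * πv v)
    = rv * πv v * (∏ k, Real.sqrt (2*π*N v k)) *
        Real.exp (a - (θ-μ)^2/(2*v) - (1/2) * ∑ k, H k * (ybar0 k - μ)^2) := by
    intro μ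
    have hbody : ∀ θ0 : Fin K → ℝ,
        rv * Real.exp (a - (1/2) * ∑ k, (n0 k / σ02 k) * (ybar0 k - θ0 k) ^ 2
          - (θ - μ) ^ 2 / (2 * v) - (1/(2*v)) * ∑ k, (θ0 k - μ) ^ 2) * πv v
        = (rv * πv v * Real.exp (a - (θ-μ)^2/(2*v))) *
            ∏ k, Real.exp (-(n0 k / σ02 k / 2)*(ybar0 k - θ0 k)^2 - (1/v/2)*(μ - θ0 k)^2) := by
      intro θ0
      rw [← Real.exp_sum]
      have e2 : ∀ k : Fin K, -(n0 k / σ02 k / 2)*(ybar0 k - θ0 k)^2 - (1/v/2)*(μ - θ0 k)^2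
          = -((1/2)*((n0 k / σ02 k) * (ybar0 k - θ0 k)^2)) + -((1/(2*v)) * ((θ0 k - μ)^2)) := by
        intro k; ring
      have e3 : (∑ k, (-(n0 k / σ02 k / 2)*(ybar0 k - θ0 k)^2 - (1/v/2)*(μ - θ0 k)^2))
          = -((1/2) * ∑ k, (n0 k / σ02 k) * (ybar0 k - θ0 k)^2)
            + -((1/(2*v)) * ∑ k, (θ0 k - μ)^2) := by
        simp only [e2]
        rw [Finset.sum_add_distrib, Finset.sum_neg_distrib, Finset.sum_neg_distrib,
          ← Finset.mul_sum, ← Finset.mul_sum]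
      rw [e3, show a - (1/2) * ∑ k, (n0 k / σ02 k) * (ybar0 k - θ0 k) ^ 2
            - (θ - μ) ^ 2 / (2 * v) - (1/(2*v)) * ∑ k, (θ0 k - μ) ^ 2
          = (a - (θ-μ)^2/(2*v)) + (-((1/2) * ∑ k, (n0 k / σ02 k) * (ybar0 k - θ0 k)^2)
            + -((1/(2*v)) * ∑ k, (θ0 k - μ)^2)) from by ring, Real.exp_add]
      ring
    calc (∫ θ0 : Fin K → ℝ,
        rv * Real.exp (a - (1/2) * ∑ k, (n0 k / σ02 k) * (ybar0 k - θ0 k) ^ 2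
          - (θ - μ) ^ 2 / (2 * v) - (1/(2*v)) * ∑ k, (θ0 k - μ) ^ 2) * πv v)
        = ∫ θ0 : Fin K → ℝ, (rv * πv v * Real.exp (a - (θ-μ)^2/(2*v))) *
            ∏ k, Real.exp (-(n0 k / σ02 k / 2)*(ybar0 k - θ0 k)^2 - (1/v/2)*(μ - θ0 k)^2) := by
          congr 1; funext θ0; exact hbody θ0
      _ = (rv * πv v * Real.exp (a - (θ-μ)^2/(2*v))) *
            ∏ k, ∫ t : ℝ, Real.exp (-(n0 k / σ02 k / 2)*(ybar0 k - t)^2 - (1/v/2)*(μ - t)^2) := by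
          rw [integral_const_mul]; congr 1; exact MeasureTheory.integral_fintype_prod_eq_prod
            (fun k t => Real.exp (-(n0 k / σ02 k / 2)*(ybar0 k - t)^2 - (1/v/2)*(μ - t)^2))
      _ = (rv * πv v * Real.exp (a - (θ-μ)^2/(2*v))) *
            ∏ k, (Real.sqrt (2*π*N v k) * Real.exp (-(H k/2)*(ybar0 k - μ)^2)) := by
          congr 1
          refine Finset.prod_congr rfl fun k _ => ?_
          rw [gauss_two (n0 k / σ02 k) (1/v) (ybar0 k) μ
            (div_pos (hn0 k) (hσ02 k)) (by simp [hv0])]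
          have hα : (0:ℝ) < n0 k / σ02 k + 1/v :=
            add_pos (div_pos (hn0 k) (hσ02 k)) (by simp [hv0])
          congr 2
          · rw [hN v hv0 k, div_eq_mul_inv]
          · rw [hHval k, show n0 k / σ02 k * (1/v) / (n0 k / σ02 k + 1/v)
                = n0 k / (σ02 k + n0 k * v) from by
              rw [div_eq_div_iff hα.ne' (hd k).ne']
              field_simp [(hσ02 k).ne', hv0.ne']
              ring]
            ring
      _ = (rv * πv v * Real.exp (a - (θ-μ)^2/(2*v))) * ((∏ k, Real.sqrt (2*π*N v k)) *
            Real.exp (-((1/2) * ∑ k, H k * (ybar0 k - μ)^2))) := by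
          rw [Finset.prod_mul_distrib, ← Real.exp_sum,
            show (∑ k, -(H k/2)*(ybar0 k - μ)^2) = -((1/2) * ∑ k, H k * (ybar0 k - μ)^2) from by
              rw [Finset.mul_sum, ← Finset.sum_neg_distrib]
              exact Finset.sum_congr rfl fun k _ => by ring]
      _ = rv * πv v * (∏ k, Real.sqrt (2*π*N v k)) *
            Real.exp (a - (θ-μ)^2/(2*v) - (1/2) * ∑ k, H k * (ybar0 k - μ)^2) := by
          rw [show a - (θ-μ)^2/(2*v) - (1/2) * ∑ k, H k * (ybar0 k - μ)^2
            = (a - (θ-μ)^2/(2*v)) + (-((1/2) * ∑ k, H k * (ybar0 k - μ)^2)) from by ring,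
            Real.exp_add]
          ring
  have hPpos : 0 < 1/v + Cf v := add_pos (by simp [hv0]) hCfpos
  -- the double integral
  have hBHMdouble : (∫ (μ : ℝ), ∫ (θ0 : Fin K → ℝ),
      rv * Real.exp (a - (1/2) * ∑ k, (n0 k / σ02 k) * (ybar0 k - θ0 k) ^ 2
        - (θ - μ) ^ 2 / (2 * v) - (1/(2*v)) * ∑ k, (θ0 k - μ) ^ 2) * πv v)
      = (rv * πv v * (∏ k, Real.sqrt (2*π*N v k))) *
        (Real.sqrt (2*π/(1/v + Cf v)) *
          Real.exp ((θ/v + S)^2/(2*(1/v + Cf v)) + (a - θ^2/(2*v) - (1/2)*SY2))) := by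
    have harg : ∀ μ : ℝ, a - (θ-μ)^2/(2*v) - (1/2) * ∑ k, H k * (ybar0 k - μ)^2
        = -((1/v + Cf v)/2) * μ^2 + (θ/v + S)*μ + (a - θ^2/(2*v) - (1/2)*SY2) := by
      intro μ
      rw [sum_quad H ybar0 μ, ← hSY2, ← hS, ← hCfeq]
      field_simp
      ring
    calc _ = ∫ (μ : ℝ), rv * πv v * (∏ k, Real.sqrt (2*π*N v k)) *
          Real.exp (-((1/v + Cf v)/2) * μ^2 + (θ/v + S)*μ + (a - θ^2/(2*v) - (1/2)*SY2)) := by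
          congr 1; funext μ; rw [hinner μ, harg μ]
      _ = _ := by
          rw [integral_const_mul, gauss_key (1/v + Cf v) (θ/v + S)
            (a - θ^2/(2*v) - (1/2)*SY2) hPpos]
  -- sqrt bookkeeping
  have hprod2π : (∏ k, Real.sqrt (2*π*N v k))
      = Real.sqrt (2*π)^K * ∏ k, Real.sqrt (N v k) := by
    have e : ∀ k : Fin K, Real.sqrt (2*π*N v k) = Real.sqrt (2*π) * Real.sqrt (N v k) :=
      fun k => Real.sqrt_mul h2π.le _
    simp only [e]
    rw [Finset.prod_mul_distrib, Finset.prod_const, Finset.card_univ, Fintype.card_fin]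
  have hsqP : Real.sqrt (2*π/(1/v + Cf v)) = Real.sqrt (2*π) * Real.sqrt (v * f v) := by
    rw [show 2*π/(1/v + Cf v) = 2*π*(v*f v) from by
      rw [hfval]; field_simp, Real.sqrt_mul h2π.le]
  -- put everything together
  rw [hcnProd θ, hcnval, mul_assoc, hmatch', hQval, hRval, hBHMdouble, hprod2π, hsqP]
  refine final_combine K a (-(f v * Cf v / 2) * θ ^ 2 + (f v * S) * θ + cc)
    ((f v * S)^2 / (2*(f v * Cf v)) + cc) (-(f v / (2 * Cf v)) * S ^ 2)
    ((v*S)^2 / (2 * v^2 * (v * f v)⁻¹)) ((1/2) * (W2 - SY2)) W2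
    ((θ/v + S)^2/(2*(1/v + Cf v)) + (a - θ^2/(2*v) - (1/2)*SY2))
    (Real.sqrt (2*π)) (Real.sqrt (f v * Cf v)) rv (∏ k, Real.sqrt (N v k))
    (Real.sqrt (v * f v)) (πv v) hs2pi.ne' (Real.sqrt_pos.mpr hp).ne' ?_
  rw [hfval]
  field_simp
  ring
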